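/- Let p be a prime and n a natural number. Let λ_0 < λ_1 < … < λ_j be a strictly increasing chain of proper nontrivial setoids on Fin n and let K ≤ Σ_n be its stabilizer; set λ_{-1} = ⊥ and λ_{j+1} = ⊤. Let D ≤ K be an elementary abelian p-subgroup acting freely on Fin n. Suppose that for some index i with 0 ≤ i ≤ j+1: the action of D on the set of λ_i-classes is transitive, the action of D on the set of λ_{i-1}-classes is not transitive, and some non-identity element d ∈ D satisfies d x ∼_{λ_i} x for all x ∈ Fin n. Then p divides the index [C : D], where C is the centralizer of D in K. -/

import Mathlib

/-- The chain `λ_0 < … < λ_j` extended by `λ_{-1} = ⊥` and `λ_{j+1} = ⊤`, reindexed so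
that `extChain lam (i + 1) = λ_i` for `0 ≤ i ≤ j`, `extChain lam 0 = λ_{-1} = ⊥`, and
`extChain lam (j + 2) = λ_{j+1} = ⊤`. -/
def extChain {n j : ℕ} (lam : Fin (j + 1) → Setoid (Fin n)) : ℕ → Setoid (Fin n)
  | 0 => ⊥
  | t + 1 => if h : t < j + 1 then lam ⟨t, h⟩ else ⊤

/-- Let `λ_0 < … < λ_j` be a chain of proper nontrivial setoids on
`Fin n` with stabilizer `K ≤ Σ_n`, let `D ≤ K` be an elementary abelian `p`-subgroup
acting freely on `Fin n`, and suppose for some `i ≤ j + 1` (with `λ_{-1} = ⊥`,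
`λ_{j+1} = ⊤`): `D` acts transitively on the `λ_i`-classes, not transitively on the
`λ_{i-1}`-classes, and some non-identity `d ∈ D` fixes every `λ_i`-class.  Then `p`
divides the index `[C : D]`, where `C` is the centralizer of `D` in `K`. -/
theorem stmt12 (p n j : ℕ) (hp : p.Prime)
    (lam : Fin (j + 1) → Setoid (Fin n)) (hmono : StrictMono lam)
    (hproper : ∀ t, ⊥ < lam t ∧ lam t < ⊤)
    (K : Subgroup (Equiv.Perm (Fin n)))
    (hK : ∀ g, g ∈ K ↔ ∀ (t : Fin (j + 1)) (x y : Fin n),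
      (lam t).r x y ↔ (lam t).r (g x) (g y))
    (D : Subgroup (Equiv.Perm (Fin n))) (hDK : D ≤ K)
    (hab : ∀ a ∈ D, ∀ b ∈ D, a * b = b * a)
    (hexp : ∀ d ∈ D, d ^ p = 1)
    (hfree : ∀ d ∈ D, d ≠ 1 → ∀ x : Fin n, d x ≠ x)
    (i : ℕ) (hi : i ≤ j + 1)
    (htrans : ∀ x y : Fin n, ∃ d ∈ D, (extChain lam (i + 1)).r (d x) y)
    (hntrans : ¬ ∀ x y : Fin n, ∃ d ∈ D, (extChain lam i).r (d x) y)
    (hd : ∃ d ∈ D, d ≠ 1 ∧ ∀ x : Fin n, (extChain lam (i + 1)).r (d x) x) :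
    p ∣ D.relIndex (Subgroup.centralizer (D : Set (Equiv.Perm (Fin n))) ⊓ K) := by
  classical
  obtain ⟨d, hdD, hd1, hdfix⟩ := hd
  push_neg at hntrans
  obtain ⟨x0, y0, hy0⟩ := hntrans
  set μ := extChain lam i with hμ
  -- `μ` is preserved by every element of `D`
  have hpres : ∀ g ∈ D, ∀ a b : Fin n, μ.r a b ↔ μ.r (g a) (g b) := by
    intro g hg a b
    rcases i with _ | m
    · have hbot : ∀ a b : Fin n, μ.r a b ↔ a = b := fun a b => Iff.rfl
      rw [hbot, hbot]
      exact ⟨fun h => by rw [h], fun h => g.injective h⟩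
    · have hm : m < j + 1 := Nat.lt_of_succ_le hi
      have : μ = lam ⟨m, hm⟩ := by rw [hμ]; simp [extChain, hm]
      rw [this]
      exact (hK g).mp (hDK hg) ⟨m, hm⟩ a b
  -- comparison lemmas
  have hlt : ∀ t : Fin (j + 1), (t : ℕ) < i → ∀ a b : Fin n,
      (lam t).r a b → μ.r a b := by
    intro t ht a b h
    rcases i with _ | m
    · exact absurd ht (Nat.not_lt_zero _)
    · have hm : m < j + 1 := Nat.lt_of_succ_le hi
      have hμm : μ = lam ⟨m, hm⟩ := by rw [hμ]; simp [extChain, hm]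
      rw [hμm]
      have hle : lam t ≤ lam ⟨m, hm⟩ :=
        hmono.monotone (by simpa [Fin.le_def] using Nat.lt_succ_iff.mp ht)
      exact Setoid.le_def.mp hle h
  have hge : ∀ t : Fin (j + 1), i ≤ (t : ℕ) → ∀ a b : Fin n,
      (extChain lam (i + 1)).r a b → (lam t).r a b := by
    intro t ht a b h
    have hij : i < j + 1 := lt_of_le_of_lt ht t.isLt
    have hdef : extChain lam (i + 1) = lam ⟨i, hij⟩ := by simp [extChain, hij]
    rw [hdef] at h
    have hle : lam ⟨i, hij⟩ ≤ lam t := hmono.monotone (by simpa [Fin.le_def] using ht)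
    exact Setoid.le_def.mp hle h
  -- the D-saturation of the μ-class of x0
  obtain ⟨X, hXdef⟩ : ∃ X : Fin n → Prop, X = fun z => ∃ g ∈ D, μ.r (g x0) z := ⟨_, rfl⟩
  have hXiff : ∀ z, X z ↔ ∃ g ∈ D, μ.r (g x0) z := fun z => by rw [hXdef]
  have hx0X : X x0 := by
    rw [hXiff]
    refine ⟨1, one_mem _, ?_⟩
    simpa using μ.refl x0
  have hy0X : ¬ X y0 := by
    rw [hXiff]
    rintro ⟨g, hg, h⟩
    exact hy0 g hg h
  have hXfwd : ∀ g ∈ D, ∀ z, X z → X (g z) := by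
    intro g hg z hz
    rw [hXiff] at hz ⊢
    obtain ⟨h, hh, hr⟩ := hz
    refine ⟨g * h, mul_mem hg hh, ?_⟩
    have h2 := (hpres g hg (h x0) z).mp hr
    simpa [Equiv.Perm.mul_apply] using h2
  have hXD : ∀ g ∈ D, ∀ z, X z ↔ X (g z) := by
    intro g hg z
    refine ⟨hXfwd g hg z, fun h => ?_⟩
    have := hXfwd g⁻¹ (inv_mem hg) (g z) h
    simpa using this
  have hXsat : ∀ z w, X z → μ.r z w → X w := by
    intro z w hz h
    rw [hXiff] at hz ⊢
    obtain ⟨g, hg, hr⟩ := hz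
    exact ⟨g, hg, μ.trans' hr h⟩
  have hXd : ∀ z, X z ↔ X (d z) := hXD d hdD
  -- the element c : d on X, identity elsewhere
  set c : Equiv.Perm (Fin n) := Equiv.Perm.ofSubtype (d.subtypePerm (fun z => (hXd z).symm)) with hc
  have hc_mem : ∀ z, X z → c z = d z := by
    intro z hz
    rw [hc, Equiv.Perm.ofSubtype_apply_of_mem _ hz, Equiv.Perm.subtypePerm_apply]
  have hc_not : ∀ z, ¬ X z → c z = z := by
    intro z hz
    rw [hc, Equiv.Perm.ofSubtype_apply_of_not_mem _ hz]
  -- c^p = 1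
  have hsp : (d.subtypePerm (fun z => (hXd z).symm)) ^ p = 1 := by
    refine Equiv.ext fun z => ?_
    refine Subtype.ext ?_
    simp [Equiv.Perm.subtypePerm_pow, hexp d hdD]
  have hcp : c ^ p = 1 := by
    rw [hc, ← map_pow, hsp, map_one]
  -- c ∈ K
  have hcK : c ∈ K := by
    rw [hK]
    intro t x y
    by_cases hx : X x <;> by_cases hy : X y
    · rw [hc_mem x hx, hc_mem y hy]
      exact (hK d).mp (hDK hdD) t x y
    · rw [hc_mem x hx, hc_not y hy]
      rcases lt_or_ge (t : ℕ) i with ht | ht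
      · constructor
        · intro h
          exact absurd (hXsat x y hx (hlt t ht x y h)) hy
        · intro h
          exact absurd (hXsat (d x) y ((hXd x).mp hx) (hlt t ht (d x) y h)) hy
      · have hdx : (lam t).r (d x) x := hge t ht (d x) x (hdfix x)
        exact ⟨fun h => (lam t).trans' hdx h, fun h => (lam t).trans' ((lam t).symm' hdx) h⟩
    · rw [hc_not x hx, hc_mem y hy]
      rcases lt_or_ge (t : ℕ) i with ht | ht
      · constructor
        · intro h
          exact absurd (hXsat y x hy ((lam t).symm' h |> hlt t ht y x)) hx
        · intro h
          exact absurd (hXsat (d y) x ((hXd y).mp hy) ((lam t).symm' h |> hlt t ht (d y) x)) hx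
      · have hdy : (lam t).r (d y) y := hge t ht (d y) y (hdfix y)
        exact ⟨fun h => (lam t).trans' h ((lam t).symm' hdy),
          fun h => (lam t).trans' h hdy⟩
    · rw [hc_not x hx, hc_not y hy]
  -- c centralizes D
  have hcCent : c ∈ Subgroup.centralizer (D : Set (Equiv.Perm (Fin n))) := by
    rw [Subgroup.mem_centralizer_iff]
    intro g hg
    refine Equiv.ext fun z => ?_
    simp only [Equiv.Perm.mul_apply]
    by_cases hz : X z
    · rw [hc_mem z hz, hc_mem (g z) (hXfwd g hg z hz)]
      have := hab g hg d hdD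
      calc g (d z) = (g * d) z := rfl
        _ = (d * g) z := by rw [this]
        _ = d (g z) := rfl
    · rw [hc_not z hz, hc_not (g z) (fun h => hz (by simpa using hXfwd g⁻¹ (inv_mem hg) (g z) h))]
  -- c ∉ D
  have hcD : c ∉ D := by
    intro hmem
    by_cases hc1 : c = 1
    · have : d x0 = x0 := by rw [← hc_mem x0 hx0X, hc1]; rfl
      exact hfree d hdD hd1 x0 this
    · exact hfree c hmem hc1 y0 (hc_not y0 hy0X)
  -- group-theoretic conclusion
  set C : Subgroup (Equiv.Perm (Fin n)) :=
    Subgroup.centralizer (D : Set (Equiv.Perm (Fin n))) ⊓ K with hC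
  have hDC : D ≤ C := by
    refine le_inf (fun g hg => Subgroup.mem_centralizer_iff.mpr fun h hh => hab h hh g hg) hDK
  have hcC : c ∈ C := ⟨hcCent, hcK⟩
  haveI hnorm : (D.subgroupOf C).Normal := by
    constructor
    intro x hx g
    rw [Subgroup.mem_subgroupOf] at hx ⊢
    have hcent : (x : Equiv.Perm (Fin n)) * g = g * x :=
      Subgroup.mem_centralizer_iff.mp g.2.1 x hx
    have : ((g * x * g⁻¹ : C) : Equiv.Perm (Fin n)) = (x : Equiv.Perm (Fin n)) := by
      push_cast
      rw [← hcent, mul_assoc]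
      simp
    rw [this]
    exact hx
  set q : C ⧸ D.subgroupOf C := QuotientGroup.mk' (D.subgroupOf C) ⟨c, hcC⟩ with hq
  have hq1 : q ≠ 1 := by
    rw [hq, Ne, QuotientGroup.mk'_apply, QuotientGroup.eq_one_iff, Subgroup.mem_subgroupOf]
    exact hcD
  have hqp : q ^ p = 1 := by
    rw [hq, ← map_pow]
    have h1 : (⟨c, hcC⟩ : C) ^ p = 1 := Subtype.ext (by simp [hcp])
    rw [h1, map_one]
  haveI : Fact p.Prime := ⟨hp⟩
  have horder : orderOf q = p := orderOf_eq_prime hqp hq1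
  have hdvd : p ∣ Nat.card (C ⧸ D.subgroupOf C) := horder ▸ orderOf_dvd_natCard q
  exact hdvd
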